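/- Let l ≥ 2 be an integer and s a real number. The 4×4 determinant det A = det [[2-l(l+1)+6s, 3, 0, 0], [-2s(2s+1), 2s-l(l+1), 4, 0], [0, -4s², -2s-l(l+1), 3], [0, 0, 2s(1-2s), 2-6s-l(l+1)]] vanishes if and only if s = l(l-1)(l+1)(l+2)/6 or s = -l(l-1)(l+1)(l+2)/6. -/

import Mathlib

/-- Hautot's sufficient condition determinant for the family G7 vanishes iff the
frequency takes the algebraically special values. -/
theorem stmt_2 (l : ℤ) (hl : 2 ≤ l) (s : ℝ) :
    Matrix.det !![2 - (l : ℝ) * ((l : ℝ) + 1) + 6 * s, 3, 0, 0;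
        -2 * s * (2 * s + 1), 2 * s - (l : ℝ) * ((l : ℝ) + 1), 4, 0;
        0, -4 * s ^ 2, -2 * s - (l : ℝ) * ((l : ℝ) + 1), 3;
        0, 0, 2 * s * (1 - 2 * s), 2 - 6 * s - (l : ℝ) * ((l : ℝ) + 1)] = 0 ↔
    (s = (l : ℝ) * ((l : ℝ) - 1) * ((l : ℝ) + 1) * ((l : ℝ) + 2) / 6 ∨
      s = -((l : ℝ) * ((l : ℝ) - 1) * ((l : ℝ) + 1) * ((l : ℝ) + 2) / 6)) := by
  have h : Matrix.det !![2 - (l : ℝ) * ((l : ℝ) + 1) + 6 * s, 3, 0, 0;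
        -2 * s * (2 * s + 1), 2 * s - (l : ℝ) * ((l : ℝ) + 1), 4, 0;
        0, -4 * s ^ 2, -2 * s - (l : ℝ) * ((l : ℝ) + 1), 3;
        0, 0, 2 * s * (1 - 2 * s), 2 - 6 * s - (l : ℝ) * ((l : ℝ) + 1)] =
      36 * (((l : ℝ) * ((l : ℝ) - 1) * ((l : ℝ) + 1) * ((l : ℝ) + 2) / 6) - s) *
        (((l : ℝ) * ((l : ℝ) - 1) * ((l : ℝ) + 1) * ((l : ℝ) + 2) / 6) + s) := by
    simp [Matrix.det_succ_row_zero, Fin.sum_univ_succ, Fin.succAbove]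
    ring
  rw [h]
  constructor
  · intro h0
    rcases mul_eq_zero.mp h0 with h1 | h1
    · rcases mul_eq_zero.mp h1 with h2 | h2
      · norm_num at h2
      · left; linarith [sub_eq_zero.mp h2]
    · right; linarith
  · rintro (rfl | rfl) <;> ring
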